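/- Let G be a group and ω : G³ → ℂˣ a normalized 3-cocycle. Define Ξ(g,h) := ω(h⁻¹,g⁻¹,g)/ω(h⁻¹g⁻¹,g,h) and σ_g := ω(g,g⁻¹,g). Then for all g,h ∈ G: Ξ(g,h) = Ξ(h⁻¹,g⁻¹) · σ_g σ_h / σ_{gh}. -/
import Mathlib


/-- Second part of Lemma 7: for a normalized 3-cocycle `ω`, with
`Ξ(g,h) = ω(h⁻¹,g⁻¹,g)/ω(h⁻¹g⁻¹,g,h)` and `σ_g = ω(g,g⁻¹,g)`, one has
`Ξ(g,h) = Ξ(h⁻¹,g⁻¹)·σ_g σ_h / σ_{gh}`. -/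
theorem Xi_eq_Xihat_dsigma
    {G : Type*} [Group G]
    (ω : G → G → G → ℂˣ)
    (hω : ∀ g h k l : G,
      ω (g * h) k l * ω g h (k * l) = ω g h k * ω g (h * k) l * ω h k l)
    (hnorm : ∀ g h : G, ω 1 g h = 1 ∧ ω g 1 h = 1 ∧ ω g h 1 = 1)
    (Ξ : G → G → ℂˣ)
    (hΞ : ∀ g h : G, Ξ g h = ω h⁻¹ g⁻¹ g / ω (h⁻¹ * g⁻¹) g h)
    (σ : G → ℂˣ)
    (hσ : ∀ g : G, σ g = ω g g⁻¹ g) :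
    ∀ g h : G, Ξ g h = Ξ h⁻¹ g⁻¹ * σ g * σ h / σ (g * h) := by
  intro g h
  have e1 := hω (h⁻¹ * g⁻¹) g h (h⁻¹ * g⁻¹)
  have e2 := hω h⁻¹ h h⁻¹ g⁻¹
  have e3 := hω h⁻¹ g⁻¹ g g⁻¹
  have e4g := hω g g⁻¹ g g⁻¹
  have e4h := hω h h⁻¹ h h⁻¹
  have e4s := hω (g * h) (h⁻¹ * g⁻¹) (g * h) (h⁻¹ * g⁻¹)
  have e5 := hω g h h⁻¹ g⁻¹
  simp only [mul_assoc, mul_inv_cancel_left, inv_mul_cancel_left, mul_inv_cancel,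
    inv_mul_cancel, mul_one, one_mul, (hnorm _ _).1, (hnorm _ _).2.1, (hnorm _ _).2.2,
    mul_inv_rev] at e1 e2 e3 e4g e4h e4s e5 ⊢
  rw [hΞ, hΞ, hσ, hσ, hσ]
  simp only [inv_inv, mul_inv_rev] at *
  rw [Units.ext_iff] at *
  push_cast at *
  field_simp at *
  simp only [one_div, div_eq_mul_inv, one_mul] at *
  -- abbreviations
  set A := ((ω h⁻¹ g⁻¹ g : ℂˣ) : ℂ) with hA
  set B := ((ω (h⁻¹ * g⁻¹) g h : ℂˣ) : ℂ) with hB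
  set P := ((ω (g * h) h⁻¹ g⁻¹ : ℂˣ) : ℂ) with hP
  set Q := ((ω g h h⁻¹ : ℂˣ) : ℂ) with hQ
  set S := ((ω (g * h) (h⁻¹ * g⁻¹) (g * h) : ℂˣ) : ℂ) with hS
  set s' := ((ω (h⁻¹ * g⁻¹) (g * h) (h⁻¹ * g⁻¹) : ℂˣ) : ℂ) with hs'
  set z := ((ω g h (h⁻¹ * g⁻¹) : ℂˣ) : ℂ) with hz
  set x := ((ω h⁻¹ h (h⁻¹ * g⁻¹) : ℂˣ) : ℂ) with hx
  set y := ((ω (h⁻¹ * g⁻¹) g g⁻¹ : ℂˣ) : ℂ) with hy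
  set u := ((ω h⁻¹ h h⁻¹ : ℂˣ) : ℂ) with hu
  set v := ((ω h h⁻¹ g⁻¹ : ℂˣ) : ℂ) with hv
  set w := ((ω g⁻¹ g g⁻¹ : ℂˣ) : ℂ) with hw
  set c := ((ω g g⁻¹ g : ℂˣ) : ℂ) with hc
  set d := ((ω h h⁻¹ h : ℂˣ) : ℂ) with hd
  have hzne : z ≠ 0 := Units.ne_zero _
  have hvne : v ≠ 0 := Units.ne_zero _
  have h2 : x * y * P = B * s' * Q * v := by
    have h1 : x * y * P * z = B * s' * Q * v * z := by linear_combination (P * z) * e1 + (B * s' * z) * e5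
    exact mul_right_cancel₀ hzne h1
  have h3 : u * A * w * P = B * s' * Q := by
    have : u * A * w * P * v = B * s' * Q * v := by linear_combination (-(y * P)) * e2 + (-(u * v * P)) * e3 + h2
    exact mul_right_cancel₀ hvne this
  linear_combination A * P * S * e4h + A * P * S * d * u * e4g + S * d * c * h3 - c * d * B * Q * e4s
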